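/- Let U be an optimal prefix-free machine and let b : {0,1}* × {0,1}* → {0,1}* be a fixed bijective total recursive pairing function, with H = H_U and joint complexity H(m,s) = H_U(b(m,s)). Then H(s) + n − H(H(s)+n, s) diverges to ∞ as n → ∞ uniformly in s; that is, for every M ∈ ℕ there exists n₀ ∈ ℕ such that for every n ≥ n₀ and every finite binary string s, H(s) + n − H(H(s)+n, s) ≥ M. Here the first argument H(s)+n ∈ ℕ is identified with a finite binary string via the bijection φ(s) = (the dyadic integer 1s) − 1. -/

import Mathlib

set_option maxHeartbeats 1000000

open scoped ENNReal

/-- A set of binary strings is prefix-free: no element is a proper prefix of another. -/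
def PrefixFreeSet (S : Set (List Bool)) : Prop :=
  ∀ p ∈ S, ∀ q ∈ S, p <+: q → p = q

/-- A prefix-free machine: a partial recursive function on binary strings
whose domain is a prefix-free set. -/
def PFMachine (C : List Bool →. List Bool) : Prop :=
  Partrec C ∧ PrefixFreeSet C.Dom

/-- `Hm C s` is the length of a shortest program `p` with `C p = s` (`∞` if none). -/
noncomputable def Hm (C : List Bool →. List Bool) (s : List Bool) : ℕ∞ :=
  sInf ((fun p : List Bool => (p.length : ℕ∞)) '' {p | s ∈ C p})

/-- An optimal prefix-free machine: for every prefix-free machine `C` there is `d ∈ ℕ`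
such that every `p ∈ dom C` has a `q` with `U q = C p` and `|q| ≤ |p| + d`. -/
def OptimalPFM (U : List Bool →. List Bool) : Prop :=
  PFMachine U ∧ ∀ C : List Bool →. List Bool, PFMachine C →
    ∃ d : ℕ, ∀ p s, s ∈ C p → ∃ q : List Bool, s ∈ U q ∧ q.length ≤ p.length + d

/-- The binary string identified with `n : ℕ` via `φ(s) = (the dyadic integer 1s) − 1`. -/
def strOfNat (n : ℕ) : List Bool := ((n + 1).bits.dropLast).reverse

namespace JointHAux


/-- value of a bit list, little-endian -/
def ofB (l : List Bool) : ℕ := l.foldr (fun b n => 2 * n + cond b 1 0) 0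

@[simp] lemma ofB_nil : ofB [] = 0 := rfl
@[simp] lemma ofB_cons (b : Bool) (l : List Bool) :
    ofB (b :: l) = 2 * ofB l + cond b 1 0 := rfl

lemma ofB_bits (n : ℕ) : ofB n.bits = n := by
  induction n using Nat.binaryRec' with
  | zero => simp
  | bit b n h ih =>
    rw [Nat.bits_append_bit n b h, ofB_cons, ih, Nat.bit_val]
    cases b <;> simp

/-- prefix code for naturals -/
def enc (k : ℕ) : List Bool := (List.replicate k.bits.length true ++ [false]) ++ k.bits

lemma enc_length (k : ℕ) : (enc k).length = 2 * k.bits.length + 1 := by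
  simp [enc]; omega

def seg (p : List Bool) (a m : ℕ) : List Bool :=
  (List.range m).map (fun i => p.getD (a + i) false)

lemma seg_eq (p : List Bool) (a m : ℕ) (h : a + m ≤ p.length) :
    seg p a m = (p.drop a).take m := by
  apply List.ext_getElem
  · simp [seg]; omega
  · intro i h1 h2
    simp only [seg, List.getElem_map, List.getElem_range, List.getElem_take, List.getElem_drop]
    rw [List.getD_eq_getElem]

def dec (p : List Bool) : Option (ℕ × List Bool) :=
  let L := p.findIdx (fun b => !b)
  if 2 * L + 1 ≤ p.length then
    some (ofB (seg p (L + 1) L), seg p (2 * L + 1) (p.length - (2 * L + 1)))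
  else none

lemma findIdx_rep (L : ℕ) (r : List Bool) :
    (List.replicate L true ++ false :: r).findIdx (fun b => !b) = L := by
  induction L with
  | zero => simp [List.findIdx_cons]
  | succ n ih => simpa [List.replicate_succ, List.findIdx_cons] using ih

lemma dec_enc (k : ℕ) (q : List Bool) : dec (enc k ++ q) = some (k, q) := by
  have hL : (enc k ++ q).findIdx (fun b => !b) = k.bits.length := by
    have : enc k ++ q = List.replicate k.bits.length true ++ false :: (k.bits ++ q) := by
      simp [enc]
    rw [this, findIdx_rep]
  have hlen : (enc k ++ q).length = 2 * k.bits.length + 1 + q.length := by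
    simp [enc_length]
  rw [dec]
  simp only [hL, hlen]
  rw [if_pos (by omega)]
  have h1 : seg (enc k ++ q) (k.bits.length + 1) k.bits.length = k.bits := by
    rw [seg_eq _ _ _ (by omega)]
    have : enc k ++ q = (List.replicate k.bits.length true ++ [false]) ++ (k.bits ++ q) := by
      simp [enc]
    rw [this, List.drop_left' (by simp), List.take_left' rfl]
  have h2 : seg (enc k ++ q) (2 * k.bits.length + 1)
      (2 * k.bits.length + 1 + q.length - (2 * k.bits.length + 1)) = q := by
    rw [seg_eq _ _ _ (by omega)]
    have : enc k ++ q = ((List.replicate k.bits.length true ++ [false]) ++ k.bits) ++ q := by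
      simp [enc]
    rw [this, List.drop_left' (by simp; omega)]
    simp
  rw [h1, h2, ofB_bits]



/-- The auxiliary machine. -/
def mach (U : List Bool →. List Bool) (b : List Bool × List Bool → List Bool) :
    List Bool →. List Bool :=
  fun p => (Part.ofOption (dec p)).bind fun kq =>
    (U kq.2).map fun s => b (strOfNat (kq.2.length + kq.1), s)

lemma mem_mach_iff {U : List Bool →. List Bool} {b : List Bool × List Bool → List Bool}
    {p t : List Bool} :
    t ∈ mach U b p ↔ ∃ kq : ℕ × List Bool, dec p = some kq ∧
      ∃ s, s ∈ U kq.2 ∧ b (strOfNat (kq.2.length + kq.1), s) = t := by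
  simp [mach, Part.mem_bind_iff, Part.mem_ofOption, Part.mem_map_iff, eq_comm]

lemma mach_eval {U : List Bool →. List Bool} {b : List Bool × List Bool → List Bool}
    {k : ℕ} {q s : List Bool} (h : s ∈ U q) :
    b (strOfNat (q.length + k), s) ∈ mach U b (enc k ++ q) := by
  rw [mem_mach_iff]
  exact ⟨(k, q), dec_enc k q, s, h, rfl⟩

lemma dec_shape {p : List Bool} {kq : ℕ × List Bool} (h : dec p = some kq) :
    2 * p.findIdx (fun b => !b) + 1 ≤ p.length ∧
      kq.2 = p.drop (2 * p.findIdx (fun b => !b) + 1) := by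
  rw [dec] at h
  by_cases hg : 2 * p.findIdx (fun b => !b) + 1 ≤ p.length
  · rw [if_pos hg] at h
    refine ⟨hg, ?_⟩
    have h0 := (Option.some_inj.1 h)
    have h2 : kq.2 = seg p (2 * p.findIdx (fun b => !b) + 1)
        (p.length - (2 * p.findIdx (fun b => !b) + 1)) := by rw [← h0]
    rw [h2, seg_eq _ _ _ (by omega)]
    apply List.take_of_length_le
    rw [List.length_drop]
  · rw [if_neg hg] at h; exact absurd h (by simp)

lemma mach_pf {U : List Bool →. List Bool} {b : List Bool × List Bool → List Bool}
    (hU : PrefixFreeSet U.Dom) : PrefixFreeSet (mach U b).Dom := by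
  intro p hp p' hp' hpre
  obtain ⟨t, ht⟩ := Part.dom_iff_mem.1 hp
  obtain ⟨t', ht'⟩ := Part.dom_iff_mem.1 hp'
  rw [mem_mach_iff] at ht ht'
  obtain ⟨kq, hdec, s, hs, -⟩ := ht
  obtain ⟨kq', hdec', s', hs', -⟩ := ht'
  obtain ⟨hg, hq⟩ := dec_shape hdec
  obtain ⟨hg', hq'⟩ := dec_shape hdec'
  set L := p.findIdx (fun b => !b) with hL
  -- findIdx of p' equals that of p
  obtain ⟨r, hr⟩ := id hpre
  have hfind : p'.findIdx (fun b => !b) = L := by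
    rw [← hr, List.findIdx_append, if_pos (by omega)]
  rw [hfind] at hg' hq'
  -- the tails are prefixes of one another
  have htail : kq.2 <+: kq'.2 := by
    rw [hq, hq']
    exact hpre.drop _
  have hdom : kq.2 ∈ U.Dom := Part.dom_iff_mem.2 ⟨s, hs⟩
  have hdom' : kq'.2 ∈ U.Dom := Part.dom_iff_mem.2 ⟨s', hs'⟩
  have heq := hU _ hdom _ hdom' htail
  apply hpre.eq_of_length
  have l1 : kq.2.length = p.length - (2 * L + 1) := by rw [hq]; simp
  have l2 : kq'.2.length = p'.length - (2 * L + 1) := by rw [hq']; simp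
  have := hpre.length_le
  rw [heq] at l1
  omega



theorem nat_pow_primrec : Primrec₂ ((· ^ ·) : ℕ → ℕ → ℕ) :=
  Primrec₂.unpaired'.1 Nat.Primrec.pow

theorem bits_eq_map (m : ℕ) :
    m.bits = (List.range m.bits.length).map (fun i => (m / 2 ^ i).bodd) := by
  induction m using Nat.binaryRec' with
  | zero => simp
  | bit b n h ih =>
    rw [Nat.bits_append_bit n b h]
    have hlen : (b :: n.bits).length = n.bits.length + 1 := rfl
    rw [hlen, List.range_succ_eq_map, List.map_cons, List.map_map]
    congr 1
    · rw [pow_zero, Nat.div_one]; exact (Nat.bodd_bit b n).symm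
    · have hcg : ∀ i ∈ List.range n.bits.length,
          ((fun i => (Nat.bit b n / 2 ^ i).bodd) ∘ Nat.succ) i = (n / 2 ^ i).bodd := by
        intro i _
        simp only [Function.comp_apply]
        rw [pow_succ', ← Nat.div_div_eq_div_mul, Nat.bit_div_two]
      rw [List.map_congr_left hcg, ← ih]

theorem size_eq_findIdx (n : ℕ) :
    n.size = (List.range (n + 1)).findIdx (fun k => decide (n < 2 ^ k)) := by
  have hsz : n.size ≤ n := by
    cases n with
    | zero => simp
    | succ m => exact Nat.size_le.2 Nat.lt_two_pow_self
  symm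
  rw [List.findIdx_eq (by simpa using Nat.lt_succ_of_le hsz)]
  constructor
  · simp [Nat.lt_size_self]
  · intro j hj
    simp only [List.getElem_range, decide_eq_false_iff_not, not_lt]
    exact le_of_not_gt fun hc => absurd (Nat.size_le.2 hc) (by omega)

theorem size_primrec : Primrec Nat.size := by
  have hp : Primrec₂ fun (n k : ℕ) => decide (n < 2 ^ k) :=
    PrimrecPred.decide (Primrec.nat_lt.comp Primrec.fst (nat_pow_primrec.comp (Primrec.const 2) Primrec.snd))
  have : Primrec fun n : ℕ => (List.range (n + 1)).findIdx (fun k => decide (n < 2 ^ k)) :=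
    Primrec.list_findIdx (Primrec.list_range.comp Primrec.succ) hp
  exact this.of_eq fun n => (size_eq_findIdx n).symm

theorem strOfNat_eq (n : ℕ) : strOfNat n =
    ((List.range ((n + 1).size - 1)).map (fun i => ((n + 1) / 2 ^ i).bodd)).reverse := by
  rw [strOfNat]
  congr 1
  rw [bits_eq_map (n + 1), ← List.map_dropLast]
  congr 1
  have hlb : (n + 1).bits.length = (n + 1).size := Nat.size_eq_bits_len _
  have hpos : 0 < (n + 1).size := Nat.size_pos.2 (Nat.succ_pos n)
  rw [← hlb]
  obtain ⟨m, hm⟩ : ∃ m, (n + 1).bits.length = m + 1 := ⟨(n + 1).bits.length - 1, by omega⟩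
  rw [hm, List.range_succ, List.dropLast_concat]
  simp

theorem strOfNat_primrec : Primrec strOfNat := by
  have : Primrec fun n : ℕ =>
      ((List.range ((n + 1).size - 1)).map (fun i => ((n + 1) / 2 ^ i).bodd)).reverse :=
    Primrec.list_reverse.comp <|
      Primrec.list_map
        (Primrec.list_range.comp <|
          (Primrec.nat_sub.comp (size_primrec.comp Primrec.succ) (Primrec.const 1)))
        (Primrec.nat_bodd.comp₂ <|
          (Primrec.nat_div.comp (Primrec.succ.comp Primrec.fst)
            (nat_pow_primrec.comp (Primrec.const 2) Primrec.snd)).to₂)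
  exact this.of_eq fun n => (strOfNat_eq n).symm



theorem seg_primrec : Primrec fun x : List Bool × ℕ × ℕ => seg x.1 x.2.1 x.2.2 :=
  Primrec.list_map (Primrec.list_range.comp (Primrec.snd.comp Primrec.snd))
    ((Primrec.list_getD false).comp (Primrec.fst.comp Primrec.fst)
      (Primrec.nat_add.comp ((Primrec.fst.comp Primrec.snd).comp Primrec.fst) Primrec.snd))

theorem ofB_primrec : Primrec ofB := by
  have hstep : Primrec₂ fun (_ : List Bool) (p : Bool × ℕ) =>
      2 * p.2 + cond p.1 1 0 :=
    (Primrec.nat_add.comp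
      (Primrec.nat_mul.comp (Primrec.const 2) (Primrec.snd.comp Primrec.snd))
      (Primrec.cond (Primrec.fst.comp Primrec.snd) (Primrec.const 1) (Primrec.const 0))).to₂
  have := Primrec.list_foldr (Primrec.id (α := List Bool)) (Primrec.const 0) hstep
  exact this.of_eq fun l => rfl

theorem findB_primrec : Primrec fun p : List Bool => p.findIdx (fun b => !b) :=
  Primrec.list_findIdx Primrec.id (Primrec.not.comp Primrec.snd)

theorem dec_primrec : Primrec dec := by
  have hL : Primrec fun p : List Bool => 2 * p.findIdx (fun b => !b) + 1 :=
    Primrec.nat_add.comp (Primrec.nat_mul.comp (Primrec.const 2) findB_primrec)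
      (Primrec.const 1)
  have hguard : PrimrecPred fun p : List Bool =>
      2 * p.findIdx (fun b => !b) + 1 ≤ p.length :=
    Primrec.nat_le.comp hL Primrec.list_length
  have hA : Primrec fun p : List Bool =>
      ofB (seg p (p.findIdx (fun b => !b) + 1) (p.findIdx (fun b => !b))) :=
    ofB_primrec.comp (seg_primrec.comp (Primrec.pair Primrec.id
      (Primrec.pair (Primrec.succ.comp findB_primrec) findB_primrec)))
  have hB : Primrec fun p : List Bool =>
      seg p (2 * p.findIdx (fun b => !b) + 1)
        (p.length - (2 * p.findIdx (fun b => !b) + 1)) :=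
    seg_primrec.comp (Primrec.pair Primrec.id
      (Primrec.pair hL (Primrec.nat_sub.comp Primrec.list_length hL)))
  have := Primrec.ite hguard (Primrec.option_some.comp (Primrec.pair hA hB))
    (Primrec.const none)
  exact this.of_eq fun p => rfl

theorem mach_partrec {U : List Bool →. List Bool} (hUp : Partrec U)
    {b : List Bool × List Bool → List Bool} (hbc : Computable b) :
    Partrec (mach U b) := by
  have hfirst : Primrec fun x : (List Bool × ℕ × List Bool) × List Bool =>
      strOfNat (x.1.2.2.length + x.1.2.1) :=
    strOfNat_primrec.comp (Primrec.nat_add.comp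
      (Primrec.list_length.comp (Primrec.snd.comp (Primrec.snd.comp Primrec.fst)))
      ((Primrec.fst.comp Primrec.snd).comp Primrec.fst))
  have hmap : Computable₂ fun (x : List Bool × ℕ × List Bool) (s : List Bool) =>
      b (strOfNat (x.2.2.length + x.2.1), s) :=
    hbc.comp (Computable.pair hfirst.to_comp Computable.snd)
  have hinner : Partrec₂ fun (_ : List Bool) (kq : ℕ × List Bool) =>
      (U kq.2).map fun s => b (strOfNat (kq.2.length + kq.1), s) :=
    Partrec.map (hUp.comp (Computable.snd.comp Computable.snd)) hmap
  exact Partrec.bind (Computable.ofOption dec_primrec.to_comp) hinner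

theorem Hm_min {U : List Bool →. List Bool} {s : List Bool} (h : ∃ p, s ∈ U p) :
    ∃ q, s ∈ U q ∧ Hm U s = (q.length : ℕ∞) ∧ ∀ p, s ∈ U p → q.length ≤ p.length := by
  set T : Set ℕ := {m | ∃ p, s ∈ U p ∧ p.length = m} with hTdef
  have hT : T.Nonempty := by
    obtain ⟨p, hp⟩ := h
    exact ⟨p.length, p, hp, rfl⟩
  obtain ⟨q, hq, hlen⟩ := Nat.sInf_mem hT
  have hmin : ∀ p, s ∈ U p → q.length ≤ p.length := by
    intro p hp
    rw [hlen]
    exact Nat.sInf_le ⟨p, hp, rfl⟩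
  refine ⟨q, hq, ?_, hmin⟩
  apply le_antisymm
  · exact sInf_le ⟨q, hq, rfl⟩
  · apply le_sInf
    rintro x ⟨p, hp, rfl⟩
    simp only
    exact Nat.cast_le.2 (hmin p hp)

theorem exists_prog {U : List Bool →. List Bool} (hU : OptimalPFM U) (s : List Bool) :
    ∃ p, s ∈ U p := by
  classical
  set C : List Bool →. List Bool :=
    fun p => Part.ofOption (if p = [] then some s else none) with hCdef
  have hC : PFMachine C := by
    constructor
    · exact Computable.ofOption
        ((Primrec.ite (Primrec.eq.comp Primrec.id (Primrec.const ([] : List Bool)))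
          (Primrec.const (some s)) (Primrec.const none)).to_comp)
    · have hdom : ∀ r, r ∈ C.Dom → r = [] := by
        intro r hr
        by_contra hne
        simp [hCdef, Part.ofOption, hne] at hr
      intro p hp q hq _
      rw [hdom p hp, hdom q hq]
  obtain ⟨d, hd⟩ := hU.2 C hC
  have hs : s ∈ C [] := by simp [hCdef, Part.ofOption]
  obtain ⟨q, hq, -⟩ := hd [] s hs
  exact ⟨q, hq⟩

theorem two_mul_le_pow (k : ℕ) : 2 * k ≤ 2 ^ k := by
  cases k with
  | zero => simp
  | succ n =>
    have := Nat.lt_two_pow_self (n := n)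
    calc 2 * (n + 1) ≤ 2 * 2 ^ n := by omega
    _ = 2 ^ (n + 1) := by rw [pow_succ]; ring

theorem size_bound (c : ℕ) : ∃ n₀ : ℕ, ∀ n, n₀ ≤ n → 2 * n.size + c ≤ n := by
  refine ⟨2 ^ (c + 24), fun n hn => ?_⟩
  have h1 : c + 24 < n.size := Nat.lt_size.2 hn
  have h2 : 2 ^ (n.size - 1) ≤ n := Nat.lt_size.1 (by omega)
  have h3 : 2 * (n.size - 3) ≤ 2 ^ (n.size - 3) := two_mul_le_pow _
  have h4 : 2 ^ (n.size - 3) * 4 = 2 ^ (n.size - 1) := by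
    have he : n.size - 3 + 2 = n.size - 1 := by omega
    rw [show (4 : ℕ) = 2 ^ 2 by norm_num, ← pow_add, he]
  omega

end JointHAux

/-- `H(s) + n − H(H(s)+n, s)` diverges to `∞` as `n → ∞`, uniformly in `s`:
for every `M` there is `n₀` such that for all `n ≥ n₀` and all `s`,
`H(H(s)+n, s) + M ≤ H(s) + n`. Here `H = H_U` and `H(m,s) = H_U(b(m,s))`. -/
theorem joint_H_diverges_uniformly (U : List Bool →. List Bool) (hU : OptimalPFM U)
    (b : List Bool × List Bool → List Bool) (hb : Function.Bijective b)
    (hbc : Computable b) :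
    ∀ M : ℕ, ∃ n₀ : ℕ, ∀ n : ℕ, n₀ ≤ n → ∀ s : List Bool,
      (Hm U (b (strOfNat ((Hm U s).toNat + n), s))).toNat + M ≤ (Hm U s).toNat + n := by
  intro M
  obtain ⟨hUpf, hopt⟩ := id hU
  have hC : PFMachine (JointHAux.mach U b) :=
    ⟨JointHAux.mach_partrec hUpf.1 hbc, JointHAux.mach_pf hUpf.2⟩
  obtain ⟨d, hd⟩ := hopt _ hC
  obtain ⟨n₀, hn₀⟩ := JointHAux.size_bound (d + M + 1)
  refine ⟨n₀, fun n hn s => ?_⟩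
  obtain ⟨q, hq, hHm, -⟩ := JointHAux.Hm_min (JointHAux.exists_prog hU s)
  have htoNat : (Hm U s).toNat = q.length := by rw [hHm]; simp
  rw [htoNat]
  have ht : b (strOfNat (q.length + n), s) ∈ JointHAux.mach U b (JointHAux.enc n ++ q) :=
    JointHAux.mach_eval hq
  obtain ⟨q', hq', hlen⟩ := hd _ _ ht
  obtain ⟨qt, hqt, hHmt, hmint⟩ := JointHAux.Hm_min ⟨q', hq'⟩
  have h1 : qt.length ≤ q'.length := hmint _ hq'
  have h2 : (Hm U (b (strOfNat (q.length + n), s))).toNat = qt.length := by rw [hHmt]; simp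
  rw [h2]
  have h3 : (JointHAux.enc n ++ q).length = 2 * n.bits.length + 1 + q.length := by
    simp [JointHAux.enc_length]
  have h4 : n.bits.length = n.size := Nat.size_eq_bits_len n
  have h5 := hn₀ n hn
  omega
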